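/- Let x ∈ 𝔻 have no sign-changing ties among its largest modulus jumps, i.e. for every τ ∈ (0,1] and all s, s' ∈ Ã_τ(x) one has Δx(s) = Δx(s') (equivalently, #𝔹_τ(x) = 0 for all τ ∈ [0,1] in the paper's notation). Then the signed largest-modulus trimmer 𝔗_rim is jointly J1-continuous at x: for every sequence x_n ∈ 𝔻 converging to x in the J1-topology there exist λ_n ∈ Λ such that simultaneously ‖λ_n − I‖ → 0, ‖x_n ∘ λ_n − x‖ → 0 and ‖𝔗_rim(x_n) ∘ λ_n − 𝔗_rim(x)‖ → 0. -/

import Mathlib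

open Filter Topology Set unitInterval

noncomputable section

open scoped Classical

instance : Fact ((0:ℝ) ≤ 1) := ⟨zero_le_one⟩

/-- The space `𝔻` of càdlàg functions on `[0,1]`: right-continuous everywhere with
finite left limits everywhere (conditions at the endpoints hold vacuously). -/
def Cadlag (x : I → ℝ) : Prop :=
  (∀ τ : I, Tendsto x (𝓝[>] τ) (𝓝 (x τ))) ∧ (∀ τ : I, ∃ l : ℝ, Tendsto x (𝓝[<] τ) (𝓝 l))

/-- The sup-norm `‖x‖ = sup_{0 ≤ τ ≤ 1} |x(τ)|`. -/
def dNorm (x : I → ℝ) : ℝ := ⨆ τ : I, |x τ|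

/-- The jump `Δx(τ) = x(τ) - x(τ-)` of `x` at `τ`, with `Δx(0) := 0`. -/
def jump (x : I → ℝ) (τ : I) : ℝ := if τ = 0 then 0 else x τ - Function.leftLim x τ

/-- The running supremum `S(x)(τ) = sup_{0 ≤ s ≤ τ} x(s)`. -/
def runSup (x : I → ℝ) (τ : I) : ℝ := sSup (x '' {s : I | s ≤ τ})

/-- The running absolute supremum `S̃(x)(τ) = sup_{0 ≤ s ≤ τ} |x(s)|`. -/
def runAbsSup (x : I → ℝ) (τ : I) : ℝ := sSup ((fun s => |x s|) '' {s : I | s ≤ τ})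

/-- The largest positive jump `S_{+Δ}(x)(τ) = sup_{0 ≤ s ≤ τ} Δx(s)`. -/
def posJumpSup (x : I → ℝ) (τ : I) : ℝ := sSup (jump x '' {s : I | s ≤ τ})

/-- The largest modulus jump `S̃_Δ(x)(τ) = sup_{0 ≤ s ≤ τ} |Δx(s)|`. -/
def modJumpSup (x : I → ℝ) (τ : I) : ℝ := sSup ((fun s => |jump x s|) '' {s : I | s ≤ τ})

/-- The first extremal positive trimming ("trim as you go") operator
`T^{(1,+)}_{rim}(x) = x - S_{+Δ}(x)`. -/
def trimPos (x : I → ℝ) : I → ℝ := fun τ => x τ - posJumpSup x τ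

/-- `Λ`: continuous strictly increasing bijections of `[0,1]` fixing the endpoints. -/
def IsTimeChange (l : I → I) : Prop := Continuous l ∧ StrictMono l ∧ l 0 = 0 ∧ l 1 = 1

/-- Convergence in the (strong) Skorokhod `J₁`-topology. -/
def J1Tendsto (xn : ℕ → I → ℝ) (x : I → ℝ) : Prop :=
  ∃ l : ℕ → I → I, (∀ n, IsTimeChange (l n)) ∧
    Tendsto (fun n => dNorm (fun τ => (l n τ : ℝ) - (τ : ℝ))) atTop (𝓝 0) ∧
    Tendsto (fun n => dNorm (fun τ => xn n (l n τ) - x τ)) atTop (𝓝 0)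

/-- `Ã_τ(x)`: the times `s ∈ (0,τ]` of the largest modulus jump of `x` on `[0,τ]`
(empty when `S̃_Δ(x)(τ) = 0`). -/
def tildeA (x : I → ℝ) (τ : I) : Set I :=
  {s : I | 0 < s ∧ s ≤ τ ∧ 0 < |jump x s| ∧ |jump x s| = modJumpSup x τ}

/-- `A⁺_τ(x)`: the times `s ∈ (0,τ]` of the largest positive jump of `x` on `[0,τ]`
(empty when `S_{+Δ}(x)(τ) = 0`). -/
def posA (x : I → ℝ) (τ : I) : Set I :=
  {s : I | 0 < s ∧ s ≤ τ ∧ 0 < jump x s ∧ jump x s = posJumpSup x τ}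

/-- The signed largest-modulus ("trim as you go") trimmer `𝔗_rim`:
`𝔗_rim(x)(τ) = x(τ) - Δx(L̃_τ(x))` if `Ã_τ(x) ≠ ∅`, `x(τ)` otherwise, where
`L̃_τ(x) = max Ã_τ(x)`. -/
def sgnModTrim (x : I → ℝ) : I → ℝ := fun τ =>
  if (tildeA x τ).Nonempty then x τ - jump x (sSup (tildeA x τ)) else x τ

/-- The record time ("lookback") trimmer:
`R_trim(x) = x - Δx(R₁(x))·1_{[R₁(x),1]}` if `A⁺₁(x) ≠ ∅`, `x` otherwise, where
`R₁(x) = min A⁺₁(x)`. -/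
def recordTrim (x : I → ℝ) : I → ℝ := fun τ =>
  if (posA x 1).Nonempty ∧ sInf (posA x 1) ≤ τ then x τ - jump x (sInf (posA x 1)) else x τ

/-- The modulus record time trimmer:
`R̃_trim(x) = x - Δx(R̃₁(x))·1_{[R̃₁(x),1]}` if `Ã₁(x) ≠ ∅`, `x` otherwise, where
`R̃₁(x) = min Ã₁(x)`. -/
def modRecordTrim (x : I → ℝ) : I → ℝ := fun τ =>
  if (tildeA x 1).Nonempty ∧ sInf (tildeA x 1) ≤ τ then x τ - jump x (sInf (tildeA x 1)) else x τ


lemma I.zero_le (s : I) : 0 ≤ s := Subtype.mk_le_mk.2 s.2.1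
lemma I.pos_of_ne {s : I} (hs : s ≠ 0) : 0 < s := (I.zero_le s).lt_of_ne (Ne.symm hs)
lemma IioNeBot {s : I} (hs : s ≠ 0) : (𝓝[<] s).NeBot :=
  nhdsWithin_Iio_self_neBot' ⟨0, I.pos_of_ne hs⟩

lemma leftLim_spec {x : I → ℝ} (hx : Cadlag x) {s : I} (hs : s ≠ 0) :
    Tendsto x (𝓝[<] s) (𝓝 (Function.leftLim x s)) := by
  obtain ⟨l, hl⟩ := hx.2 s
  have : Function.leftLim x s = l :=
    leftLim_eq_of_tendsto (h := IioNeBot hs) hl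
  rw [this]; exact hl

lemma jump_zero (x : I → ℝ) : jump x 0 = 0 := if_pos rfl

lemma eventually_nhds_bound {x : I → ℝ} (hx : Cadlag x) (t : I) :
    ∃ C : ℝ, ∀ᶠ u in 𝓝 t, |x u| ≤ C := by
  obtain ⟨l, hl⟩ := hx.2 t
  have h1 : ∀ᶠ u in 𝓝[>] t, |x u| ≤ |x t| + 1 := by
    filter_upwards [(hx.1 t).eventually (Metric.ball_mem_nhds (x t) one_pos)] with u hu
    have : |x u - x t| < 1 := by simpa [Real.dist_eq] using hu
    calc |x u| ≤ |x u - x t| + |x t| := by simpa using abs_add_le (x u - x t) (x t)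
    _ ≤ |x t| + 1 := by linarith
  have h2 : ∀ᶠ u in 𝓝[<] t, |x u| ≤ |l| + 1 := by
    filter_upwards [hl.eventually (Metric.ball_mem_nhds l one_pos)] with u hu
    have : |x u - l| < 1 := by simpa [Real.dist_eq] using hu
    calc |x u| ≤ |x u - l| + |l| := by simpa using abs_add_le (x u - l) l
    _ ≤ |l| + 1 := by linarith
  refine ⟨max (max (|x t| + 1) (|l| + 1)) (|x t|), ?_⟩
  have huniv : (univ : Set I) = Iio t ∪ ({t} ∪ Ioi t) := by
    ext u
    rcases lt_trichotomy u t with h | h | h <;> simp [h]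
  have : 𝓝 t = 𝓝[Iio t] t ⊔ (𝓝[{t}] t ⊔ 𝓝[Ioi t] t) := by
    rw [← nhdsWithin_union, ← nhdsWithin_union, ← huniv, nhdsWithin_univ]
  rw [this]
  refine Filter.eventually_sup.2 ⟨?_, Filter.eventually_sup.2 ⟨?_, ?_⟩⟩
  · filter_upwards [h2] with u hu
    exact le_max_of_le_left (le_max_of_le_right hu)
  · rw [nhdsWithin_singleton, eventually_pure]
    exact le_max_right _ _
  · filter_upwards [h1] with u hu
    exact le_max_of_le_left (le_max_of_le_left hu)

lemma cadlag_bounded {x : I → ℝ} (hx : Cadlag x) : ∃ C, 0 ≤ C ∧ ∀ τ, |x τ| ≤ C := by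
  choose fC hfC using eventually_nhds_bound hx
  obtain ⟨T, hT⟩ := isCompact_univ.elim_nhds_subcover (fun t => {u | |x u| ≤ fC t})
    (fun t _ => hfC t)
  have hTne : T.Nonempty := by
    rcases Set.mem_iUnion₂.1 (hT.2 (mem_univ (0 : I))) with ⟨t, ht, _⟩
    exact ⟨t, ht⟩
  refine ⟨max 0 (T.sup' hTne fC), le_max_left _ _, fun τ => ?_⟩
  rcases Set.mem_iUnion₂.1 (hT.2 (mem_univ τ)) with ⟨t, ht, htu⟩
  exact le_trans (htu : |x τ| ≤ fC t) (le_max_of_le_right (Finset.le_sup' fC ht))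

lemma leftLim_abs_le {x : I → ℝ} (hx : Cadlag x) {C : ℝ} (hC : ∀ τ, |x τ| ≤ C)
    {s : I} (hs : s ≠ 0) : |Function.leftLim x s| ≤ C := by
  haveI := IioNeBot hs
  exact le_of_tendsto ((leftLim_spec hx hs).abs) (Filter.Eventually.of_forall fun u => hC u)

lemma jump_abs_le {x : I → ℝ} (hx : Cadlag x) {C : ℝ} (hC0 : 0 ≤ C) (hC : ∀ τ, |x τ| ≤ C)
    (s : I) : |jump x s| ≤ 2 * C := by
  rcases eq_or_ne s 0 with rfl | hs
  · rw [jump_zero]; simpa using by linarith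
  · rw [jump, if_neg hs]
    calc |x s - Function.leftLim x s| ≤ |x s| + |Function.leftLim x s| := abs_sub _ _
    _ ≤ C + C := add_le_add (hC s) (leftLim_abs_le hx hC hs)
    _ = 2 * C := by ring

lemma jump_sub_le {x y : I → ℝ} (hx : Cadlag x) (hy : Cadlag y) {δ : ℝ}
    (h : ∀ τ, |y τ - x τ| ≤ δ) (s : I) : |jump y s - jump x s| ≤ 2 * δ := by
  have hδ : 0 ≤ δ := le_trans (abs_nonneg _) (h 0)
  rcases eq_or_ne s 0 with rfl | hs
  · rw [jump_zero, jump_zero]; simpa using by linarith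
  · haveI := IioNeBot hs
    have hll : |Function.leftLim y s - Function.leftLim x s| ≤ δ := by
      have := ((leftLim_spec hy hs).sub (leftLim_spec hx hs)).abs
      exact le_of_tendsto this (Filter.Eventually.of_forall fun u => h u)
    rw [jump, jump, if_neg hs, if_neg hs]
    have : y s - Function.leftLim y s - (x s - Function.leftLim x s)
        = (y s - x s) - (Function.leftLim y s - Function.leftLim x s) := by ring
    rw [this]
    calc |_ - _| ≤ |y s - x s| + |Function.leftLim y s - Function.leftLim x s| := abs_sub _ _
    _ ≤ δ + δ := add_le_add (h s) hll
    _ = 2 * δ := by ring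

lemma small_jump_nhds {x : I → ℝ} (hx : Cadlag x) {ε : ℝ} (hε : 0 < ε) (t : I) :
    ∃ U ∈ 𝓝 t, ∀ s ∈ U, s ≠ t → |jump x s| < ε := by
  obtain ⟨l, hl⟩ := hx.2 t
  have h1 : {u : I | |x u - x t| < ε/4} ∈ 𝓝[>] t := by
    have := Metric.tendsto_nhds.mp (hx.1 t) (ε/4) (by linarith)
    filter_upwards [this] with u hu
    simpa [Real.dist_eq] using hu
  have h2 : {u : I | |x u - l| < ε/4} ∈ 𝓝[<] t := by
    have := Metric.tendsto_nhds.mp hl (ε/4) (by linarith)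
    filter_upwards [this] with u hu
    simpa [Real.dist_eq] using hu
  rw [Metric.mem_nhdsWithin_iff] at h1 h2
  obtain ⟨r1, hr1, hb1⟩ := h1
  obtain ⟨r2, hr2, hb2⟩ := h2
  refine ⟨Metric.ball t (min r1 r2), Metric.ball_mem_nhds t (lt_min hr1 hr2), fun s hsU hst => ?_⟩
  have hdist : |(s:ℝ) - (t:ℝ)| < min r1 r2 := by
    simpa [Subtype.dist_eq, Real.dist_eq] using hsU
  rcases lt_or_gt_of_ne hst with hlt | hgt
  · -- s < t
    rcases eq_or_ne s 0 with rfl | hs0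
    · rw [jump_zero]; simpa using hε
    haveI := IioNeBot hs0
    have hxs : |x s - l| < ε/4 := by
      refine hb2 ⟨?_, hlt⟩
      simpa [Metric.mem_ball, Subtype.dist_eq, Real.dist_eq] using hdist.trans_le (min_le_right _ _)
    have hW : {u : I | (t:ℝ) - r2 < (u:ℝ)} ∩ Iio s ∈ 𝓝[<] s := by
      refine inter_mem ?_ self_mem_nhdsWithin
      refine mem_nhdsWithin_of_mem_nhds (IsOpen.mem_nhds ?_ ?_)
      · exact isOpen_induced_iff.2 ⟨Ioi ((t:ℝ) - r2), isOpen_Ioi, rfl⟩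
      · simp only [mem_setOf_eq]
        have : (s:ℝ) - (t:ℝ) > -(min r1 r2) := neg_lt_of_abs_lt hdist
        have := min_le_right r1 r2
        linarith
    have hLl : |Function.leftLim x s - l| ≤ ε/4 := by
      refine le_of_tendsto ((leftLim_spec hx hs0).sub_const l).abs ?_
      filter_upwards [hW] with u hu
      have hu1 : (t:ℝ) - r2 < (u:ℝ) := hu.1
      have hu2 : u < s := hu.2
      have : |x u - l| < ε/4 := by
        refine hb2 ⟨?_, hu2.trans hlt⟩
        have : (u:ℝ) < t := Subtype.coe_lt_coe.2 (hu2.trans hlt)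
        simp only [Metric.mem_ball, Subtype.dist_eq, Real.dist_eq]
        rw [abs_sub_lt_iff]; constructor <;> linarith
      linarith [le_abs_self (x u - l), abs_nonneg (x u - l)]
    rw [jump, if_neg hs0]
    calc |x s - Function.leftLim x s| = |(x s - l) - (Function.leftLim x s - l)| := by ring_nf
    _ ≤ |x s - l| + |Function.leftLim x s - l| := abs_sub _ _
    _ < ε := by linarith
  · -- t < s
    have hs0 : s ≠ 0 := fun h => by
      exact absurd (h ▸ hgt) (not_lt.2 (I.zero_le t))
    haveI := IioNeBot hs0
    have hxs : |x s - x t| < ε/4 := by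
      refine hb1 ⟨?_, hgt⟩
      simpa [Metric.mem_ball, Subtype.dist_eq, Real.dist_eq] using hdist.trans_le (min_le_left _ _)
    have hW : Ioo t s ∈ 𝓝[<] s := Ioo_mem_nhdsLT_of_mem ⟨hgt, le_refl s⟩
    have hLl : |Function.leftLim x s - x t| ≤ ε/4 := by
      refine le_of_tendsto ((leftLim_spec hx hs0).sub_const (x t)).abs ?_
      filter_upwards [hW] with u hu
      have : |x u - x t| < ε/4 := by
        refine hb1 ⟨?_, hu.1⟩
        have h1' : (t:ℝ) < (u:ℝ) := Subtype.coe_lt_coe.2 hu.1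
        have h2' : (u:ℝ) < (s:ℝ) := Subtype.coe_lt_coe.2 hu.2
        have h3' : (s:ℝ) - (t:ℝ) < min r1 r2 := lt_of_abs_lt hdist
        have := min_le_left r1 r2
        simp only [Metric.mem_ball, Subtype.dist_eq, Real.dist_eq]
        rw [abs_sub_lt_iff]; constructor <;> linarith
      linarith [le_abs_self (x u - x t), abs_nonneg (x u - x t)]
    rw [jump, if_neg hs0]
    calc |x s - Function.leftLim x s| = |(x s - x t) - (Function.leftLim x s - x t)| := by ring_nf
    _ ≤ |x s - x t| + |Function.leftLim x s - x t| := abs_sub _ _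
    _ < ε := by linarith

lemma finite_jumps {x : I → ℝ} (hx : Cadlag x) {ε : ℝ} (hε : 0 < ε) :
    {s : I | ε ≤ |jump x s|}.Finite := by
  choose U hU hUs using small_jump_nhds hx hε
  obtain ⟨T, hT⟩ := isCompact_univ.elim_nhds_subcover U (fun t _ => hU t)
  refine Set.Finite.subset T.finite_toSet (fun s hs => ?_)
  rcases Set.mem_iUnion₂.1 (hT.2 (mem_univ s)) with ⟨t, ht, hst⟩
  rcases eq_or_ne s t with rfl | hne
  · exact ht
  · exact absurd hs (not_le.2 (hUs t s hst hne))

lemma modJumpSup_bddAbove {x : I → ℝ} (hx : Cadlag x) (τ : I) :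
    ∃ C, 0 ≤ C ∧ ∀ b ∈ (fun s => |jump x s|) '' {s : I | s ≤ τ}, b ≤ 2 * C := by
  obtain ⟨C, hC0, hC⟩ := cadlag_bounded hx
  exact ⟨C, hC0, by rintro b ⟨s, -, rfl⟩; exact jump_abs_le hx hC0 hC s⟩

lemma le_modJumpSup {x : I → ℝ} (hx : Cadlag x) {s τ : I} (hsτ : s ≤ τ) :
    |jump x s| ≤ modJumpSup x τ := by
  obtain ⟨C, hC0, hC⟩ := modJumpSup_bddAbove hx τ
  exact le_csSup ⟨2 * C, fun b hb => hC b hb⟩ ⟨s, hsτ, rfl⟩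

lemma modJumpSup_le {x : I → ℝ} {τ : I} {a : ℝ} (h : ∀ s, s ≤ τ → |jump x s| ≤ a) :
    modJumpSup x τ ≤ a :=
  csSup_le ⟨|jump x 0|, 0, I.zero_le τ, rfl⟩ (by rintro b ⟨s, hs, rfl⟩; exact h s hs)

lemma modJumpSup_nonneg {x : I → ℝ} (hx : Cadlag x) (τ : I) : 0 ≤ modJumpSup x τ :=
  le_trans (abs_nonneg _) (le_modJumpSup hx (I.zero_le τ))

lemma exists_greatest_I {S : Set I} (h : S.Finite) (hne : S.Nonempty) :
    ∃ m ∈ S, ∀ a ∈ S, a ≤ m := by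
  obtain ⟨m, hm, hmax⟩ := Set.Finite.exists_maximalFor id S h hne
  exact ⟨m, hm, fun a ha => le_of_not_gt fun h' => absurd (hmax ha h'.le) (not_le.2 h')⟩

lemma tildeA_finite {x : I → ℝ} (hx : Cadlag x) {τ : I} (h : (tildeA x τ).Nonempty) :
    (tildeA x τ).Finite := by
  obtain ⟨s₀, hs₀⟩ := h
  have hM : 0 < modJumpSup x τ := hs₀.2.2.2 ▸ hs₀.2.2.1
  exact (finite_jumps hx hM).subset (fun s hs => by rw [mem_setOf_eq, hs.2.2.2])

lemma sSup_tildeA_mem {x : I → ℝ} (hx : Cadlag x) {τ : I} (h : (tildeA x τ).Nonempty) :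
    sSup (tildeA x τ) ∈ tildeA x τ := by
  obtain ⟨m, hm, hmax⟩ := exists_greatest_I (tildeA_finite hx h) h
  have : sSup (tildeA x τ) = m := le_antisymm (sSup_le hmax) (le_sSup hm)
  rw [this]; exact hm

lemma tildeA_nonempty_of_pos {x : I → ℝ} (hx : Cadlag x) {τ : I}
    (hM : 0 < modJumpSup x τ) : (tildeA x τ).Nonempty := by
  set M := modJumpSup x τ with hMdef
  have hex : ∃ s ∈ {s : I | s ≤ τ}, M / 2 < |jump x s| := by
    obtain ⟨b, ⟨s, hs, rfl⟩, hb⟩ := exists_lt_of_lt_csSup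
      (⟨|jump x 0|, 0, I.zero_le τ, rfl⟩ : ((fun s => |jump x s|) '' {s : I | s ≤ τ}).Nonempty)
      (show M / 2 < M by linarith)
    exact ⟨s, hs, hb⟩
  obtain ⟨s₁, hs₁τ, hs₁⟩ := hex
  set V := {s : I | s ≤ τ ∧ M / 2 ≤ |jump x s|} with hV
  have hVfin : V.Finite := (finite_jumps hx (by linarith : (0:ℝ) < M / 2)).subset
    (fun s hs => hs.2)
  have hVne : V.Nonempty := ⟨s₁, hs₁τ, hs₁.le⟩
  obtain ⟨m, hm, hmax⟩ := Set.Finite.exists_maximalFor (fun s => |jump x s|) V hVfin hVne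
  have hmax' : ∀ a ∈ V, |jump x a| ≤ |jump x m| :=
    fun a ha => le_of_not_gt fun h' => absurd (hmax ha h'.le) (not_le.2 h')
  have h1 : |jump x m| ≤ M := le_modJumpSup hx hm.1
  have h2 : M ≤ |jump x m| := by
    refine modJumpSup_le (fun s hs => ?_) |>.trans (le_refl _) |>.trans (le_refl _)
    rcases le_or_gt (M / 2) (|jump x s|) with hc | hc
    · exact hmax' s ⟨hs, hc⟩
    · linarith [hmax' s₁ ⟨hs₁τ, hs₁.le⟩, hs₁]
  have heq : |jump x m| = M := le_antisymm h1 h2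
  have hm0 : m ≠ 0 := by
    intro h0
    rw [h0, jump_zero] at heq
    simp at heq; linarith
  exact ⟨m, I.pos_of_ne hm0, hm.1, heq ▸ hM, heq⟩

lemma modJumpSup_close {x y : I → ℝ} (hx : Cadlag x) (hy : Cadlag y) {δ : ℝ}
    (h : ∀ τ, |y τ - x τ| ≤ δ) (τ : I) :
    |modJumpSup y τ - modJumpSup x τ| ≤ 2 * δ := by
  rw [abs_sub_le_iff]
  constructor
  · rw [sub_le_iff_le_add]
    refine modJumpSup_le (fun s hs => ?_)
    calc |jump y s| ≤ |jump x s| + 2 * δ := by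
          have := jump_sub_le hx hy h s
          have := abs_sub_abs_le_abs_sub (jump y s) (jump x s)
          linarith
    _ ≤ modJumpSup x τ + 2 * δ := by linarith [le_modJumpSup hx hs]
    _ = 2 * δ + modJumpSup x τ := by ring
  · rw [sub_le_iff_le_add]
    refine modJumpSup_le (fun s hs => ?_)
    calc |jump x s| ≤ |jump y s| + 2 * δ := by
          have := jump_sub_le hx hy h s
          have := abs_sub_abs_le_abs_sub (jump x s) (jump y s)
          linarith [abs_sub_comm (jump y s) (jump x s)]
    _ ≤ modJumpSup y τ + 2 * δ := by linarith [le_modJumpSup hy hs]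
    _ = 2 * δ + modJumpSup y τ := by ring

lemma gap_of_finite {D : Set ℝ} (hD : D.Finite) :
    ∃ ρ > 0, ∀ a ∈ D, ∀ b ∈ D, a < b → a ≤ b - ρ := by
  classical
  set G := (fun p : ℝ × ℝ => p.2 - p.1) '' {p ∈ D ×ˢ D | p.1 < p.2} with hG
  have hGfin : G.Finite := ((hD.prod hD).subset (sep_subset _ _)).image _
  rcases eq_empty_or_nonempty G with hGe | hGne
  · refine ⟨1, one_pos, fun a ha b hb hab => ?_⟩
    exfalso
    have hmem : b - a ∈ G := ⟨(a, b), ⟨⟨ha, hb⟩, hab⟩, rfl⟩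
    rw [hGe] at hmem
    exact notMem_empty _ hmem
  · obtain ⟨g, hg⟩ := hGne
    have hmem : sInf G ∈ G := Set.Nonempty.csInf_mem ⟨g, hg⟩ hGfin
    obtain ⟨⟨a₀, b₀⟩, ⟨-, hlt⟩, heq⟩ := hmem
    refine ⟨sInf G, heq ▸ sub_pos.2 hlt, fun a ha b hb hab => ?_⟩
    have : sInf G ≤ b - a := csInf_le hGfin.bddBelow ⟨(a, b), ⟨⟨ha, hb⟩, hab⟩, rfl⟩
    linarith

def cJ (x : I → ℝ) (τ : I) : ℝ :=
  if (tildeA x τ).Nonempty then jump x (sSup (tildeA x τ)) else 0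

lemma sgnModTrim_eq (x : I → ℝ) (τ : I) : sgnModTrim x τ = x τ - cJ x τ := by
  by_cases h : (tildeA x τ).Nonempty <;> simp [sgnModTrim, cJ, h]

lemma cJ_abs_le {x : I → ℝ} (hx : Cadlag x) (τ : I) : |cJ x τ| ≤ modJumpSup x τ := by
  rw [cJ]
  split_ifs with h
  · exact (sSup_tildeA_mem hx h).2.2.2.le
  · simpa using modJumpSup_nonneg hx τ

lemma main_trim {x : I → ℝ} (hx : Cadlag x)
    (hties : ∀ τ : I, ∀ s ∈ tildeA x τ, ∀ s' ∈ tildeA x τ, jump x s = jump x s')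
    {ε : ℝ} (hε : 0 < ε) :
    ∃ δ > 0, ∀ y : I → ℝ, Cadlag y → (∀ τ, |y τ - x τ| ≤ δ) →
      ∀ τ, |sgnModTrim y τ - sgnModTrim x τ| ≤ ε := by
  set ε₁ := ε / 8 with hε₁
  have hε₁pos : 0 < ε₁ := by rw [hε₁]; linarith
  have hF : {s : I | ε₁ / 2 ≤ |jump x s|}.Finite := finite_jumps hx (by linarith)
  have hD : ((fun s => |jump x s|) '' {s : I | ε₁ / 2 ≤ |jump x s|}).Finite := hF.image _
  obtain ⟨ρ, hρpos, hρ⟩ := gap_of_finite hD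
  refine ⟨min (ε₁ / 8) (ρ / 8), lt_min (by linarith) (by linarith), fun y hy h τ => ?_⟩
  set δ := min (ε₁ / 8) (ρ / 8) with hδdef
  have hδpos : 0 < δ := lt_min (by linarith) (by linarith)
  have hδ1 : δ ≤ ε₁ / 8 := min_le_left _ _
  have hδ2 : δ ≤ ρ / 8 := min_le_right _ _
  have hjc : ∀ s, |jump y s - jump x s| ≤ 2 * δ := jump_sub_le hx hy h
  have hMc : |modJumpSup y τ - modJumpSup x τ| ≤ 2 * δ := modJumpSup_close hx hy h τ
  set M := modJumpSup x τ with hMdef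
  have hM0 : 0 ≤ M := modJumpSup_nonneg hx τ
  rw [sgnModTrim_eq, sgnModTrim_eq]
  have hkey : |cJ y τ - cJ x τ| ≤ 2 * ε₁ + 2 * δ ∨ |cJ y τ - cJ x τ| ≤ 2 * δ := by
    rcases le_or_gt M ε₁ with hsmall | hbig
    · left
      have h1 : |cJ x τ| ≤ M := cJ_abs_le hx τ
      have h2 : |cJ y τ| ≤ modJumpSup y τ := cJ_abs_le hy τ
      have h3 : modJumpSup y τ ≤ M + 2 * δ := by
        have := abs_sub_le_iff.1 hMc
        linarith [this.1]
      calc |cJ y τ - cJ x τ| ≤ |cJ y τ| + |cJ x τ| := abs_sub _ _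
      _ ≤ (M + 2 * δ) + M := add_le_add (h2.trans h3) h1
      _ ≤ 2 * ε₁ + 2 * δ := by linarith
    · right
      have hAx : (tildeA x τ).Nonempty := tildeA_nonempty_of_pos hx (by linarith)
      have hmx := sSup_tildeA_mem hx hAx
      have hcx : cJ x τ = jump x (sSup (tildeA x τ)) := if_pos hAx
      have hMy : M - 2 * δ ≤ modJumpSup y τ := by
        have := abs_sub_le_iff.1 hMc
        linarith [this.2]
      have hAy : (tildeA y τ).Nonempty := tildeA_nonempty_of_pos hy (by linarith)
      have hmy := sSup_tildeA_mem hy hAy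
      have hcy : cJ y τ = jump y (sSup (tildeA y τ)) := if_pos hAy
      set my := sSup (tildeA y τ) with hmydef
      set mx := sSup (tildeA x τ) with hmxdef
      have hjymy : |jump y my| = modJumpSup y τ := hmy.2.2.2
      have hjxmy_lb : M - 4 * δ ≤ |jump x my| := by
        have h1 := hjc my
        have h2 := abs_sub_abs_le_abs_sub (jump y my) (jump x my)
        linarith
      have hjxmy_ub : |jump x my| ≤ M := le_modJumpSup hx hmy.2.1
      have hMD : M ∈ (fun s => |jump x s|) '' {s : I | ε₁ / 2 ≤ |jump x s|} := by
        refine ⟨mx, ?_, hmx.2.2.2⟩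
        rw [mem_setOf_eq, hmx.2.2.2]
        linarith
      have hmyD : |jump x my| ∈ (fun s => |jump x s|) '' {s : I | ε₁ / 2 ≤ |jump x s|} := by
        refine ⟨my, ?_, rfl⟩
        rw [mem_setOf_eq]
        linarith
      have hjxmy : |jump x my| = M := by
        rcases eq_or_lt_of_le hjxmy_ub with h' | h'
        · exact h'
        · exfalso
          have := hρ _ hmyD _ hMD h'
          linarith
      have hmyA : my ∈ tildeA x τ := ⟨hmy.1, hmy.2.1, by rw [hjxmy]; linarith, hjxmy⟩
      have hties' : jump x my = jump x mx := hties τ my hmyA mx hmx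
      rw [hcy, hcx, ← hties']
      exact hjc my
  have htot : |y τ - cJ y τ - (x τ - cJ x τ)| ≤ |y τ - x τ| + |cJ y τ - cJ x τ| := by
    have : y τ - cJ y τ - (x τ - cJ x τ) = (y τ - x τ) - (cJ y τ - cJ x τ) := by ring
    rw [this]; exact abs_sub _ _
  rcases hkey with hk | hk
  · calc |y τ - cJ y τ - (x τ - cJ x τ)| ≤ |y τ - x τ| + |cJ y τ - cJ x τ| := htot
    _ ≤ δ + (2 * ε₁ + 2 * δ) := add_le_add (h τ) hk
    _ ≤ ε := by linarith
  · calc |y τ - cJ y τ - (x τ - cJ x τ)| ≤ |y τ - x τ| + |cJ y τ - cJ x τ| := htot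
    _ ≤ δ + 2 * δ := add_le_add (h τ) hk
    _ ≤ ε := by linarith

lemma I.le_one (s : I) : s ≤ 1 := Subtype.coe_le_coe.1 s.2.2

lemma tc_surj {l : I → I} (hl : IsTimeChange l) : Function.Surjective l := by
  intro b
  have h := intermediate_value_univ (0 : I) 1 hl.1
  rw [hl.2.2.1, hl.2.2.2] at h
  exact h ⟨I.zero_le b, I.le_one b⟩

noncomputable def tcIso (l : I → I) (hl : IsTimeChange l) : I ≃o I :=
  StrictMono.orderIsoOfSurjective l hl.2.1 (tc_surj hl)

lemma tcIso_apply {l : I → I} (hl : IsTimeChange l) (s : I) : tcIso l hl s = l s := rfl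

noncomputable def tcHomeo (l : I → I) (hl : IsTimeChange l) : I ≃ₜ I :=
  Continuous.homeoOfEquivCompactToT2 (f := (tcIso l hl).toEquiv) hl.1

lemma tcHomeo_apply {l : I → I} (hl : IsTimeChange l) (s : I) : tcHomeo l hl s = l s := rfl

lemma tc_image_Iio {l : I → I} (hl : IsTimeChange l) (s : I) : l '' Iio s = Iio (l s) := by
  ext b
  constructor
  · rintro ⟨a, ha, rfl⟩; exact hl.2.1 ha
  · intro hb
    refine ⟨(tcIso l hl).symm b, ?_, (tcIso l hl).apply_symm_apply b⟩
    have hlb : l ((tcIso l hl).symm b) = b := (tcIso l hl).apply_symm_apply b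
    exact hl.2.1.lt_iff_lt.1 (by rw [hlb]; exact hb)
lemma tc_image_Ioi {l : I → I} (hl : IsTimeChange l) (s : I) : l '' Ioi s = Ioi (l s) := by
  ext b
  constructor
  · rintro ⟨a, ha, rfl⟩; exact hl.2.1 ha
  · intro hb
    refine ⟨(tcIso l hl).symm b, ?_, (tcIso l hl).apply_symm_apply b⟩
    have hlb : l ((tcIso l hl).symm b) = b := (tcIso l hl).apply_symm_apply b
    exact hl.2.1.lt_iff_lt.1 (by rw [hlb]; exact hb)
lemma tc_image_Iic {l : I → I} (hl : IsTimeChange l) (s : I) : l '' Iic s = Iic (l s) := by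
  ext b
  constructor
  · rintro ⟨a, ha, rfl⟩; exact hl.2.1.monotone ha
  · intro hb
    refine ⟨(tcIso l hl).symm b, ?_, (tcIso l hl).apply_symm_apply b⟩
    have hlb : l ((tcIso l hl).symm b) = b := (tcIso l hl).apply_symm_apply b
    exact hl.2.1.le_iff_le.1 (by rw [hlb]; exact hb)

lemma tc_map_Iio {l : I → I} (hl : IsTimeChange l) (s : I) :
    Filter.map l (𝓝[<] s) = 𝓝[<] (l s) := by
  have h := (tcHomeo l hl).isEmbedding.map_nhdsWithin_eq (Iio s) s
  have him : (tcHomeo l hl) '' Iio s = Iio (l s) := tc_image_Iio hl s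
  rw [him] at h
  exact h
lemma tc_map_Ioi {l : I → I} (hl : IsTimeChange l) (s : I) :
    Filter.map l (𝓝[>] s) = 𝓝[>] (l s) := by
  have h := (tcHomeo l hl).isEmbedding.map_nhdsWithin_eq (Ioi s) s
  have him : (tcHomeo l hl) '' Ioi s = Ioi (l s) := tc_image_Ioi hl s
  rw [him] at h
  exact h

lemma cadlag_comp {x : I → ℝ} {l : I → I} (hx : Cadlag x) (hl : IsTimeChange l) :
    Cadlag (x ∘ l) := by
  constructor
  · intro τ
    have := hx.1 (l τ)
    rw [← tc_map_Ioi hl, Filter.tendsto_map'_iff] at this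
    exact this
  · intro τ
    obtain ⟨c, hc⟩ := hx.2 (l τ)
    refine ⟨c, ?_⟩
    rw [← tc_map_Iio hl, Filter.tendsto_map'_iff] at hc
    exact hc

lemma tc_zero_iff {l : I → I} (hl : IsTimeChange l) (s : I) : l s = 0 ↔ s = 0 := by
  constructor
  · intro h; exact hl.2.1.injective (h.trans hl.2.2.1.symm)
  · rintro rfl; exact hl.2.2.1

lemma jump_comp {x : I → ℝ} {l : I → I} (hx : Cadlag x) (hl : IsTimeChange l) (s : I) :
    jump (x ∘ l) s = jump x (l s) := by
  rcases eq_or_ne s 0 with rfl | hs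
  · rw [jump_zero, hl.2.2.1, jump_zero]
  · have hls : l s ≠ 0 := fun h => hs ((tc_zero_iff hl s).1 h)
    have hL : Tendsto x (𝓝[<] (l s)) (𝓝 (Function.leftLim x (l s))) := leftLim_spec hx hls
    have hLc : Tendsto (x ∘ l) (𝓝[<] s) (𝓝 (Function.leftLim x (l s))) := by
      rw [← tc_map_Iio hl, Filter.tendsto_map'_iff] at hL
      exact hL
    have : Function.leftLim (x ∘ l) s = Function.leftLim x (l s) :=
      leftLim_eq_of_tendsto (h := IioNeBot hs) hLc
    rw [jump, jump, if_neg hs, if_neg hls, this]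
    rfl

lemma modJumpSup_comp {x : I → ℝ} {l : I → I} (hx : Cadlag x) (hl : IsTimeChange l) (τ : I) :
    modJumpSup (x ∘ l) τ = modJumpSup x (l τ) := by
  rw [modJumpSup, modJumpSup]
  congr 1
  have h1 : (fun s => |jump (x ∘ l) s|) '' {s : I | s ≤ τ}
      = ((fun s => |jump x s|) ∘ l) '' {s : I | s ≤ τ} :=
    Set.image_congr (fun s _ => by rw [jump_comp hx hl s]; rfl)
  rw [h1, Set.image_comp]
  show (fun s => |jump x s|) '' (l '' Iic τ) = (fun s => |jump x s|) '' Iic (l τ)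
  rw [tc_image_Iic hl τ]

lemma tildeA_comp {x : I → ℝ} {l : I → I} (hx : Cadlag x) (hl : IsTimeChange l) (τ : I) :
    tildeA (x ∘ l) τ = l ⁻¹' (tildeA x (l τ)) := by
  ext s
  simp only [tildeA, mem_setOf_eq, mem_preimage]
  rw [jump_comp hx hl s, modJumpSup_comp hx hl τ]
  have h1 : 0 < s ↔ 0 < l s := by
    constructor
    · intro h; rw [← hl.2.2.1]; exact hl.2.1 h
    · intro h
      rcases eq_or_ne s 0 with rfl | hs
      · rw [hl.2.2.1] at h; exact absurd h (lt_irrefl 0)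
      · exact I.pos_of_ne hs
  have h2 : s ≤ τ ↔ l s ≤ l τ := (hl.2.1.le_iff_le).symm
  rw [h1, h2]

lemma sgnModTrim_comp {x : I → ℝ} {l : I → I} (hx : Cadlag x) (hl : IsTimeChange l) (τ : I) :
    sgnModTrim (x ∘ l) τ = sgnModTrim x (l τ) := by
  rw [sgnModTrim_eq, sgnModTrim_eq]
  have hxτ : (x ∘ l) τ = x (l τ) := rfl
  rw [hxτ]
  congr 1
  rw [cJ, cJ, tildeA_comp hx hl τ]
  by_cases hne : (tildeA x (l τ)).Nonempty
  · have hpre : (l ⁻¹' (tildeA x (l τ))).Nonempty := by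
      obtain ⟨b, hb⟩ := hne
      obtain ⟨a, rfl⟩ := tc_surj hl b
      exact ⟨a, hb⟩
    rw [if_pos hpre, if_pos hne, jump_comp hx hl]
    congr 1
    set e := tcIso l hl with he
    have h1 : l ⁻¹' (tildeA x (l τ)) = ⇑e.symm '' (tildeA x (l τ)) := by
      ext a
      constructor
      · intro ha; exact ⟨l a, ha, e.symm_apply_apply a⟩
      · rintro ⟨b, hb, rfl⟩
        have hab : l (e.symm b) = b := e.apply_symm_apply b
        show l (e.symm b) ∈ tildeA x (l τ)
        rw [hab]; exact hb
    have h2 : sSup (e.symm '' (tildeA x (l τ))) = e.symm (sSup (tildeA x (l τ))) := by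
      rw [OrderIso.map_sSup e.symm, sSup_image]
    rw [h1, h2]
    exact e.apply_symm_apply _
  · have hpre : ¬(l ⁻¹' (tildeA x (l τ))).Nonempty := by
      intro ⟨a, ha⟩; exact hne ⟨l a, ha⟩
    rw [if_neg hpre, if_neg hne]

lemma dNorm_nonneg (f : I → ℝ) : 0 ≤ dNorm f :=
  Real.iSup_nonneg (fun τ => abs_nonneg _)

lemma dNorm_le {f : I → ℝ} {a : ℝ} (ha : 0 ≤ a) (h : ∀ τ, |f τ| ≤ a) : dNorm f ≤ a :=
  Real.iSup_le h ha

lemma le_dNorm {x y : I → ℝ} (hx : Cadlag x) (hy : Cadlag y) (τ : I) :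
    |y τ - x τ| ≤ dNorm (fun τ => y τ - x τ) := by
  obtain ⟨Cx, _, hCx⟩ := cadlag_bounded hx
  obtain ⟨Cy, _, hCy⟩ := cadlag_bounded hy
  refine le_ciSup (f := fun τ => |y τ - x τ|) ⟨Cy + Cx, ?_⟩ τ
  rintro b ⟨u, rfl⟩
  calc |y u - x u| ≤ |y u| + |x u| := abs_sub _ _
  _ ≤ Cy + Cx := add_le_add (hCy u) (hCx u)


/-- if `x ∈ 𝔻` has no sign-changing ties among its largest modulus
jumps, the signed largest-modulus trimmer `𝔗_rim` is jointly `J₁`-continuous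
at `x`. -/
theorem stmt9 (x : I → ℝ) (hx : Cadlag x)
    (hties : ∀ τ : I, ∀ s ∈ tildeA x τ, ∀ s' ∈ tildeA x τ, jump x s = jump x s')
    (xn : ℕ → I → ℝ) (hxn : ∀ n, Cadlag (xn n)) (hJ1 : J1Tendsto xn x) :
    ∃ l : ℕ → I → I, (∀ n, IsTimeChange (l n)) ∧
      Tendsto (fun n => dNorm (fun τ => (l n τ : ℝ) - (τ : ℝ))) atTop (𝓝 0) ∧
      Tendsto (fun n => dNorm (fun τ => xn n (l n τ) - x τ)) atTop (𝓝 0) ∧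
      Tendsto (fun n => dNorm (fun τ => sgnModTrim (xn n) (l n τ) - sgnModTrim x τ))
        atTop (𝓝 0) := by
  obtain ⟨l, hlT, hl1, hl2⟩ := hJ1
  refine ⟨l, hlT, hl1, hl2, ?_⟩
  have hyc : ∀ n, Cadlag (xn n ∘ l n) := fun n => cadlag_comp (hxn n) (hlT n)
  rw [Metric.tendsto_atTop]
  intro ε hε
  obtain ⟨δ, hδpos, hδ⟩ := main_trim hx hties (half_pos hε)
  obtain ⟨N, hN⟩ := (Metric.tendsto_atTop.1 hl2) δ hδpos
  refine ⟨N, fun n hn => ?_⟩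
  have hptw : ∀ τ, |(xn n ∘ l n) τ - x τ| ≤ δ := by
    intro τ
    have h1 : |(xn n ∘ l n) τ - x τ| ≤ dNorm (fun τ => (xn n ∘ l n) τ - x τ) :=
      le_dNorm hx (hyc n) τ
    have h2 : dNorm (fun τ => xn n (l n τ) - x τ) < δ := by
      have := hN n hn
      rwa [Real.dist_eq, sub_zero, abs_of_nonneg (dNorm_nonneg _)] at this
    exact h1.trans h2.le
  have hmain := hδ (xn n ∘ l n) (hyc n) hptw
  have hrw : ∀ τ, sgnModTrim (xn n) (l n τ) = sgnModTrim (xn n ∘ l n) τ :=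
    fun τ => (sgnModTrim_comp (hxn n) (hlT n) τ).symm
  have hdn : dNorm (fun τ => sgnModTrim (xn n) (l n τ) - sgnModTrim x τ) ≤ ε / 2 := by
    refine dNorm_le (by linarith) (fun τ => ?_)
    rw [hrw τ]
    exact hmain τ
  rw [Real.dist_eq, sub_zero, abs_of_nonneg (dNorm_nonneg _)]
  linarith


end
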